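/- Let ε > 0, assume D_f > 0, D_g > 0, R > 0, choose ρ = ε/(4 D_f), μ = ε/(4 D_g), and let p ∈ ℝ^m satisfy θ(p) + v(D) ≤ ε, ‖A x_{ρ,p} − x_{μ,p}‖ ≤ 2ε/R, and ‖p‖ ≤ 2√3·R. Then |f(x_{ρ,p}) + g(x_{μ,p}) − v(D)| ≤ 2(1 + 2√3)·ε; in particular, by weak duality, f(x_{ρ,p}) + g(x_{μ,p}) ≤ v(P) + 2(1 + 2√3)·ε. -/

import Mathlib

open scoped RealInnerProductSpace
noncomputable section

/-- `Euc k` is the Euclidean space `ℝ^k`. -/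
abbrev Euc (k : ℕ) := EuclideanSpace ℝ (Fin k)

/-- `f` is proper: nowhere `-∞` and somewhere finite. -/
def IsProperFn {k : ℕ} (f : Euc k → EReal) : Prop :=
  (∀ x, f x ≠ ⊥) ∧ ∃ x, f x ≠ ⊤

/-- Convexity of an extended-real-valued function. -/
def IsConvexFn {k : ℕ} (f : Euc k → EReal) : Prop :=
  ∀ x y : Euc k, ∀ t : ℝ, 0 < t → t < 1 →
    f (t • x + (1 - t) • y) ≤ (t : EReal) * f x + ((1 - t : ℝ) : EReal) * f y

/-- `f` is proper, convex, lower semicontinuous with bounded effective domain. -/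
def NiceFn {k : ℕ} (f : Euc k → EReal) : Prop :=
  IsProperFn f ∧ IsConvexFn f ∧ LowerSemicontinuous f ∧
    Bornology.IsBounded {x | f x ≠ ⊤}

/-- The Fenchel conjugate `f*(q) = sup_x {⟨q,x⟩ - f(x)}` (real-valued). -/
noncomputable def conjFn {k : ℕ} (f : Euc k → EReal) (q : Euc k) : ℝ :=
  (⨆ x, ((⟪q, x⟫ : ℝ) : EReal) - f x).toReal

/-- The Fenchel conjugate as an extended real. -/
noncomputable def conjE {k : ℕ} (f : Euc k → EReal) (q : Euc k) : EReal :=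
  ⨆ x, ((⟪q, x⟫ : ℝ) : EReal) - f x

/-- The smoothed conjugate `f_r*(q) = sup_x {⟨q,x⟩ - f(x) - (r/2)‖x‖²}`. -/
noncomputable def conjSm {k : ℕ} (f : Euc k → EReal) (r : ℝ) (q : Euc k) : ℝ :=
  (⨆ x, ((⟪q, x⟫ - r / 2 * ‖x‖ ^ 2 : ℝ) : EReal) - f x).toReal

/-- The proximal objective `x ↦ f(x) + (r/2)‖u - x‖²`. -/
noncomputable def proxObj {k : ℕ} (f : Euc k → EReal) (r : ℝ) (u x : Euc k) : EReal :=
  f x + ((r / 2 * ‖u - x‖ ^ 2 : ℝ) : EReal)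

/-- `D_f = sup {‖x‖²/2 : x ∈ dom f}`. -/
noncomputable def Dsup {k : ℕ} (f : Euc k → EReal) : ℝ :=
  sSup ((fun x : Euc k => ‖x‖ ^ 2 / 2) '' {x | f x ≠ ⊤})

/-- `x0` is the unique global minimizer of `h`. -/
def UniqMin {α : Type*} {β : Type*} [Preorder β] (h : α → β) (x0 : α) : Prop :=
  (∀ x, h x0 ≤ h x) ∧ ∀ x, (∀ y, h x ≤ h y) → x = x0

/-- The dual objective `θ(p) = f*(A*p) + g*(-p)`. -/
noncomputable def theta {n m : ℕ} (f : Euc n → EReal) (g : Euc m → EReal)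
    (A : Euc n →L[ℝ] Euc m) (p : Euc m) : ℝ :=
  conjFn f (ContinuousLinearMap.adjoint A p) + conjFn g (-p)

/-- The singly smoothed dual objective `θ_{ρ,μ}(p) = f_ρ*(A*p) + g_μ*(-p)`. -/
noncomputable def thetaSm {n m : ℕ} (f : Euc n → EReal) (g : Euc m → EReal)
    (A : Euc n →L[ℝ] Euc m) (r s : ℝ) (p : Euc m) : ℝ :=
  conjSm f r (ContinuousLinearMap.adjoint A p) + conjSm g s (-p)

/-- The doubly smoothed dual objective `θ_{ρ,μ,κ}(p) = θ_{ρ,μ}(p) + (κ/2)‖p‖²`. -/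
noncomputable def thetaSmK {n m : ℕ} (f : Euc n → EReal) (g : Euc m → EReal)
    (A : Euc n →L[ℝ] Euc m) (r s c : ℝ) (p : Euc m) : ℝ :=
  thetaSm f g A r s p + c / 2 * ‖p‖ ^ 2

/-- The optimal value of the primal problem `v(P) = inf {f(x) + g(Ax)}`. -/
noncomputable def vPrimal {n m : ℕ} (f : Euc n → EReal) (g : Euc m → EReal)
    (A : Euc n →L[ℝ] Euc m) : EReal := ⨅ x, f x + g (A x)

/-- The optimal value of the dual problem `v(D) = -inf θ`. -/
noncomputable def vDual {n m : ℕ} (f : Euc n → EReal) (g : Euc m → EReal)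
    (A : Euc n →L[ℝ] Euc m) : ℝ := -(⨅ p, theta f g A p)

/-! ### Auxiliary lemmas -/

/-- lsc + proper + bounded domain implies bounded below. -/
lemma nice_bddBelow {k : ℕ} {f : Euc k → EReal} (hbot : ∀ x, f x ≠ ⊥)
    (hlsc : LowerSemicontinuous f) (hbdd : Bornology.IsBounded {x | f x ≠ ⊤}) :
    ∃ c : ℝ, ∀ x, (c : EReal) ≤ f x := by
  by_contra h
  push_neg at h
  set V : ℕ → Set (Euc k) := fun n => {x | f x ≤ ((-(n : ℝ) : ℝ) : EReal)} with hV
  have hVclosed : ∀ n, IsClosed (V n) := fun n => hlsc.isClosed_preimage _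
  have hVsub : ∀ n, V n ⊆ {x | f x ≠ ⊤} := by
    intro n x hx hT
    rw [Set.mem_setOf_eq, hT] at hx
    exact absurd hx (not_le.mpr (EReal.coe_lt_top _))
  have hVmono : ∀ n, V (n + 1) ⊆ V n := by
    intro n x hx
    refine le_trans hx (EReal.coe_le_coe_iff.mpr ?_)
    push_cast; linarith
  have hVne : ∀ n, (V n).Nonempty := by
    intro n
    obtain ⟨x, hx⟩ := h (-(n : ℝ))
    exact ⟨x, hx.le⟩
  have hcomp : IsCompact (closure {x | f x ≠ ⊤}) := hbdd.isCompact_closure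
  have hV0 : IsCompact (V 0) :=
    hcomp.of_isClosed_subset (hVclosed 0) ((hVsub 0).trans subset_closure)
  obtain ⟨x, hx⟩ := IsCompact.nonempty_iInter_of_sequence_nonempty_isCompact_isClosed
    V hVmono hVne hV0 hVclosed
  have hxb : f x = ⊥ := by
    by_contra hb
    have hlt : (⊥ : EReal) < f x := Ne.bot_lt hb
    obtain ⟨z, _, hz2⟩ := EReal.exists_between_coe_real hlt
    obtain ⟨N, hN⟩ := exists_nat_gt (-z)
    have hxN : f x ≤ ((-(N : ℝ) : ℝ) : EReal) := Set.mem_iInter.mp hx N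
    have hlt2 : ((-(N : ℝ) : ℝ) : EReal) < (z : EReal) := EReal.coe_lt_coe_iff.mpr (by linarith)
    exact absurd (hxN.trans_lt (hlt2.trans hz2)) (lt_irrefl _)
  exact hbot x hxb

/-- Membership in the effective domain bounds `‖x‖²/2` by `Dsup`. -/
lemma le_Dsup {k : ℕ} {f : Euc k → EReal} (hbdd : Bornology.IsBounded {x | f x ≠ ⊤})
    {x : Euc k} (hx : f x ≠ ⊤) : ‖x‖ ^ 2 / 2 ≤ Dsup f := by
  obtain ⟨M, hM⟩ := hbdd.exists_norm_le
  refine le_csSup ⟨M ^ 2 / 2, ?_⟩ ⟨x, hx, rfl⟩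
  rintro _ ⟨y, hy, rfl⟩
  have h1 : ‖y‖ ≤ M := hM y hy
  have h2 : (0:ℝ) ≤ ‖y‖ := norm_nonneg y
  nlinarith

/-- The prox minimizer is in the domain and maximizes the smoothed conjugate integrand. -/
lemma prox_conj {k : ℕ} {f : Euc k → EReal} (hbot : ∀ x, f x ≠ ⊥) (hfin : ∃ x, f x ≠ ⊤)
    {r : ℝ} (hr : 0 < r) (q xs : Euc k)
    (hmin : ∀ x, proxObj f r (r⁻¹ • q) xs ≤ proxObj f r (r⁻¹ • q) x) :
    f xs ≠ ⊤ ∧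
    ∀ x : Euc k, ((⟪q, x⟫ - r / 2 * ‖x‖ ^ 2 : ℝ) : EReal) - f x ≤
      ((⟪q, xs⟫ - r / 2 * ‖xs‖ ^ 2 : ℝ) : EReal) - f xs := by
  set u : Euc k := r⁻¹ • q with hu
  have hqu : ∀ x : Euc k, ⟪q, x⟫ = r * ⟪u, x⟫ := by
    intro x
    rw [hu, real_inner_smul_left]
    field_simp
  have key : ∀ x : Euc k, ⟪q, x⟫ - r / 2 * ‖x‖ ^ 2
      = r / 2 * ‖u‖ ^ 2 - r / 2 * ‖u - x‖ ^ 2 := by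
    intro x
    rw [hqu x, norm_sub_sq_real]
    ring
  have termEq : ∀ x : Euc k, ((⟪q, x⟫ - r / 2 * ‖x‖ ^ 2 : ℝ) : EReal) - f x
      = ((r / 2 * ‖u‖ ^ 2 : ℝ) : EReal) - proxObj f r u x := by
    intro x
    unfold proxObj
    by_cases hT : f x = ⊤
    · rw [hT, EReal.top_add_coe]
      rfl
    · rw [← EReal.coe_toReal hT (hbot x), ← EReal.coe_add, ← EReal.coe_sub, ← EReal.coe_sub,
        EReal.coe_eq_coe_iff]
      have := key x
      linarith
  have hxsT : f xs ≠ ⊤ := by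
    obtain ⟨x₀, hx₀⟩ := hfin
    intro hT
    have h1 : proxObj f r u xs = ⊤ := by
      unfold proxObj
      rw [hT]
      exact EReal.top_add_coe _
    have h2 : proxObj f r u x₀ < ⊤ := by
      unfold proxObj
      exact EReal.add_lt_top hx₀ (EReal.coe_ne_top _)
    exact absurd ((h1 ▸ hmin x₀).trans_lt h2) (lt_irrefl _)
  refine ⟨hxsT, fun x => ?_⟩
  rw [termEq x, termEq xs]
  exact EReal.sub_le_sub le_rfl (hmin x)

/-- Finiteness of the conjugate and the Fenchel–Young inequality for nice functions. -/
lemma conjE_facts {k : ℕ} {f : Euc k → EReal} (hf : NiceFn f) (q : Euc k) :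
    (conjFn f q : EReal) = conjE f q ∧
      ∀ x, ((⟪q, x⟫ : ℝ) : EReal) ≤ f x + (conjFn f q : EReal) := by
  obtain ⟨⟨hbot, x₀, hx₀⟩, _, hlsc, hbdd⟩ := hf
  obtain ⟨c, hc⟩ := nice_bddBelow hbot hlsc hbdd
  obtain ⟨M, hM⟩ := hbdd.exists_norm_le
  set a₀ : ℝ := (f x₀).toReal with ha₀
  have hfa₀ : f x₀ = (a₀ : EReal) := (EReal.coe_toReal hx₀ (hbot x₀)).symm
  have hlb : ((⟪q, x₀⟫ - a₀ : ℝ) : EReal) ≤ conjE f q := by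
    have := le_iSup (fun x => ((⟪q, x⟫ : ℝ) : EReal) - f x) x₀
    rw [hfa₀, ← EReal.coe_sub] at this
    exact this
  have hub : conjE f q ≤ ((‖q‖ * M - c : ℝ) : EReal) := by
    refine iSup_le fun x => ?_
    by_cases hT : f x = ⊤
    · rw [hT]
      exact bot_le.trans_eq rfl
    · rw [← EReal.coe_toReal hT (hbot x), ← EReal.coe_sub, EReal.coe_le_coe_iff]
      have h1 : ⟪q, x⟫ ≤ ‖q‖ * ‖x‖ := real_inner_le_norm q x
      have h2 : ‖x‖ ≤ M := hM x hT
      have h3 : c ≤ (f x).toReal := by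
        have := hc x
        rw [← EReal.coe_toReal hT (hbot x), EReal.coe_le_coe_iff] at this
        exact this
      have h4 : (0:ℝ) ≤ ‖q‖ := norm_nonneg q
      nlinarith [norm_nonneg x]
  have hne_bot : conjE f q ≠ ⊥ := fun h => by
    rw [h] at hlb
    exact EReal.coe_ne_bot _ (le_bot_iff.mp hlb)
  have hne_top : conjE f q ≠ ⊤ := fun h => by
    rw [h] at hub
    exact EReal.coe_ne_top _ (top_le_iff.mp hub)
  have hcoe : (conjFn f q : EReal) = conjE f q := EReal.coe_toReal hne_top hne_bot
  refine ⟨hcoe, fun x => ?_⟩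
  by_cases hT : f x = ⊤
  · rw [hT, EReal.top_add_coe]
    exact le_top
  · have h1 : ((⟪q, x⟫ : ℝ) : EReal) - f x ≤ conjE f q :=
      le_iSup (fun x => ((⟪q, x⟫ : ℝ) : EReal) - f x) x
    rw [← EReal.coe_toReal hT (hbot x), ← EReal.coe_sub, ← hcoe, EReal.coe_le_coe_iff] at h1
    rw [← EReal.coe_toReal hT (hbot x), ← EReal.coe_add, EReal.coe_le_coe_iff]
    linarith

/-- Sandwich for the conjugate via the prox minimizer. -/
lemma conj_sandwich {k : ℕ} {f : Euc k → EReal} (hf : NiceFn f) {r : ℝ} (hr : 0 < r)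
    (q xs : Euc k) (hmin : ∀ x, proxObj f r (r⁻¹ • q) xs ≤ proxObj f r (r⁻¹ • q) x) :
    f xs ≠ ⊤ ∧
    (⟪q, xs⟫ - r / 2 * ‖xs‖ ^ 2 - (f xs).toReal ≤ conjFn f q ∧
     conjFn f q ≤ ⟪q, xs⟫ - r / 2 * ‖xs‖ ^ 2 - (f xs).toReal + r * Dsup f) := by
  obtain ⟨hbot, -⟩ := hf.1
  obtain ⟨hxsT, hmax⟩ := prox_conj hbot hf.1.2 hr q xs hmin
  set a : ℝ := (f xs).toReal with ha
  have hfa : f xs = (a : EReal) := (EReal.coe_toReal hxsT (hbot xs)).symm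
  obtain ⟨hcoe, -⟩ := conjE_facts hf q
  set s : ℝ := ⟪q, xs⟫ - r / 2 * ‖xs‖ ^ 2 - a with hs
  have hterm : ((⟪q, xs⟫ - r / 2 * ‖xs‖ ^ 2 : ℝ) : EReal) - f xs = (s : EReal) := by
    rw [hfa, ← EReal.coe_sub]
  clear_value s a
  have hlow : (s : EReal) ≤ conjE f q := by
    have h1 : ((⟪q, xs⟫ : ℝ) : EReal) - f xs ≤ conjE f q :=
      le_iSup (fun x => ((⟪q, x⟫ : ℝ) : EReal) - f x) xs
    refine le_trans ?_ h1
    rw [hfa, ← EReal.coe_sub, EReal.coe_le_coe_iff]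
    have hpos : (0:ℝ) ≤ r / 2 * ‖xs‖ ^ 2 :=
      mul_nonneg (by linarith) (sq_nonneg ‖xs‖)
    linarith
  have hup : conjE f q ≤ ((s + r * Dsup f : ℝ) : EReal) := by
    refine iSup_le fun x => ?_
    by_cases hT : f x = ⊤
    · rw [hT]
      exact bot_le.trans_eq rfl
    · have hD : ‖x‖ ^ 2 / 2 ≤ Dsup f := le_Dsup hf.2.2.2 hT
      have h2 : ((⟪q, x⟫ - r / 2 * ‖x‖ ^ 2 : ℝ) : EReal) - f x ≤ (s : EReal) :=
        (hmax x).trans_eq hterm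
      rw [← EReal.coe_toReal hT (hbot x), ← EReal.coe_sub, EReal.coe_le_coe_iff] at h2 ⊢
      have hprod : r * (‖x‖ ^ 2 / 2) ≤ r * Dsup f := mul_le_mul_of_nonneg_left hD hr.le
      linarith
  constructor
  · exact hxsT
  constructor
  · have := hlow
    rw [← hcoe, EReal.coe_le_coe_iff] at this
    exact this
  · have := hup
    rw [← hcoe, EReal.coe_le_coe_iff] at this
    exact this

/-- Construction of an approximately optimal primal solution: if `θ(p) + v(D) ≤ ε`,
`‖A x_{ρ,p} - x_{μ,p}‖ ≤ 2ε/R` and `‖p‖ ≤ 2√3 R`, then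
`|f(x_{ρ,p}) + g(x_{μ,p}) - v(D)| ≤ 2(1 + 2√3)ε`, and in particular, by weak duality,
`f(x_{ρ,p}) + g(x_{μ,p}) ≤ v(P) + 2(1 + 2√3)ε`. -/
theorem stmt16 (n m : ℕ) (f : Euc n → EReal) (g : Euc m → EReal)
    (A : Euc n →L[ℝ] Euc m) (hf : NiceFn f) (hg : NiceFn g)
    (hfeas : ∃ x, f x ≠ ⊤ ∧ g (A x) ≠ ⊤)
    (ε R : ℝ) (hε : 0 < ε) (hDf : 0 < Dsup f) (hDg : 0 < Dsup g) (hR : 0 < R)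
    (ρ μ : ℝ) (hρ : ρ = ε / (4 * Dsup f)) (hμ : μ = ε / (4 * Dsup g))
    (xρ : Euc m → Euc n) (xμ : Euc m → Euc m)
    (hxρ : ∀ p : Euc m,
      UniqMin (proxObj f ρ (ρ⁻¹ • (ContinuousLinearMap.adjoint A p))) (xρ p))
    (hxμ : ∀ p : Euc m, UniqMin (proxObj g μ (-(μ⁻¹ • p))) (xμ p))
    (p : Euc m)
    (h1 : theta f g A p + vDual f g A ≤ ε)
    (h2 : ‖A (xρ p) - xμ p‖ ≤ 2 * ε / R)
    (h3 : ‖p‖ ≤ 2 * Real.sqrt 3 * R) :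
    ∃ a b : ℝ, f (xρ p) = (a : EReal) ∧ g (xμ p) = (b : EReal) ∧
      |a + b - vDual f g A| ≤ 2 * (1 + 2 * Real.sqrt 3) * ε ∧
      ((a + b : ℝ) : EReal)
        ≤ vPrimal f g A + ((2 * (1 + 2 * Real.sqrt 3) * ε : ℝ) : EReal) := by
  have hS3 : (0:ℝ) ≤ Real.sqrt 3 := Real.sqrt_nonneg 3
  obtain ⟨x₀, hfx₀, hgx₀⟩ := hfeas
  have hfbot := hf.1.1
  have hgbot := hg.1.1
  have hρ0 : 0 < ρ := by rw [hρ]; positivity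
  have hμ0 : 0 < μ := by rw [hμ]; positivity
  have hρD : ρ * Dsup f = ε / 4 := by rw [hρ]; field_simp
  have hμD : μ * Dsup g = ε / 4 := by rw [hμ]; field_simp
  obtain ⟨hfsT, hlow₁, hup₁⟩ :=
    conj_sandwich hf hρ0 (ContinuousLinearMap.adjoint A p) (xρ p) (hxρ p).1
  have hgmin : ∀ x, proxObj g μ (μ⁻¹ • (-p)) (xμ p) ≤ proxObj g μ (μ⁻¹ • (-p)) x := by
    have := (hxμ p).1
    simpa [smul_neg] using this
  obtain ⟨hgsT, hlow₂, hup₂⟩ := conj_sandwich hg hμ0 (-p) (xμ p) hgmin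
  have hfa : f (xρ p) = (((f (xρ p)).toReal : ℝ) : EReal) :=
    (EReal.coe_toReal hfsT (hfbot _)).symm
  have hgb : g (xμ p) = (((g (xμ p)).toReal : ℝ) : EReal) :=
    (EReal.coe_toReal hgsT (hgbot _)).symm
  have hinner1 : ⟪ContinuousLinearMap.adjoint A p, xρ p⟫ = ⟪p, A (xρ p)⟫ :=
    ContinuousLinearMap.adjoint_inner_left A (xρ p) p
  have hinner2 : ⟪(-p : Euc m), xμ p⟫ = -⟪p, xμ p⟫ := inner_neg_left p (xμ p)
  rw [hinner1] at hlow₁ hup₁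
  rw [hinner2] at hlow₂ hup₂
  rw [hρD] at hup₁
  rw [hμD] at hup₂
  have hIsub : ⟪p, A (xρ p) - xμ p⟫ = ⟪p, A (xρ p)⟫ - ⟪p, xμ p⟫ :=
    inner_sub_right p (A (xρ p)) (xμ p)
  have hIabs : |⟪p, A (xρ p) - xμ p⟫| ≤ 4 * (Real.sqrt 3 * ε) := by
    have h4 : |⟪p, A (xρ p) - xμ p⟫| ≤ ‖p‖ * ‖A (xρ p) - xμ p‖ := abs_real_inner_le_norm _ _
    have h5 : ‖p‖ * ‖A (xρ p) - xμ p‖ ≤ (2 * Real.sqrt 3 * R) * (2 * ε / R) :=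
      mul_le_mul h3 h2 (norm_nonneg _) (by positivity)
    have h6 : (2 * Real.sqrt 3 * R) * (2 * ε / R) = 4 * (Real.sqrt 3 * ε) := by
      field_simp
      ring
    linarith
  obtain ⟨hI1, hI2⟩ := abs_le.mp hIabs
  rw [hIsub] at hI1 hI2
  have hDx : ρ / 2 * ‖xρ p‖ ^ 2 ≤ ε / 4 := by
    have h7 := le_Dsup hf.2.2.2 hfsT
    have h8 : ρ * (‖xρ p‖ ^ 2 / 2) ≤ ρ * Dsup f := mul_le_mul_of_nonneg_left h7 hρ0.le
    linarith
  have hDx0 : 0 ≤ ρ / 2 * ‖xρ p‖ ^ 2 := by positivity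
  have hDy : μ / 2 * ‖xμ p‖ ^ 2 ≤ ε / 4 := by
    have h7 := le_Dsup hg.2.2.2 hgsT
    have h8 : μ * (‖xμ p‖ ^ 2 / 2) ≤ μ * Dsup g := mul_le_mul_of_nonneg_left h7 hμ0.le
    linarith
  have hDy0 : 0 ≤ μ / 2 * ‖xμ p‖ ^ 2 := by positivity
  have hFYf : ∀ q x, ((⟪q, x⟫ : ℝ) : EReal) ≤ f x + (conjFn f q : EReal) :=
    fun q => (conjE_facts hf q).2
  have hFYg : ∀ q x, ((⟪q, x⟫ : ℝ) : EReal) ≤ g x + (conjFn g q : EReal) :=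
    fun q => (conjE_facts hg q).2
  have hfa₀ : f x₀ = (((f x₀).toReal : ℝ) : EReal) := (EReal.coe_toReal hfx₀ (hfbot _)).symm
  have hgb₀ : g (A x₀) = (((g (A x₀)).toReal : ℝ) : EReal) :=
    (EReal.coe_toReal hgx₀ (hgbot _)).symm
  have hθlb : ∀ p' : Euc m, -((f x₀).toReal + (g (A x₀)).toReal) ≤ theta f g A p' := by
    intro p'
    have h7 := hFYf (ContinuousLinearMap.adjoint A p') x₀
    have h8 := hFYg (-p') (A x₀)
    rw [hfa₀, ← EReal.coe_add, EReal.coe_le_coe_iff] at h7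
    rw [hgb₀, ← EReal.coe_add, EReal.coe_le_coe_iff] at h8
    rw [ContinuousLinearMap.adjoint_inner_left A x₀ p'] at h7
    rw [inner_neg_left p' (A x₀)] at h8
    unfold theta
    linarith
  have hbddθ : BddBelow (Set.range (theta f g A)) :=
    ⟨-((f x₀).toReal + (g (A x₀)).toReal), by rintro _ ⟨p', rfl⟩; exact hθlb p'⟩
  have hvd1 : -(vDual f g A) ≤ theta f g A p := by
    unfold vDual
    rw [neg_neg]
    exact ciInf_le hbddθ p
  have hwp : ∀ (p' : Euc m) (x : Euc n),
      ((-(theta f g A p') : ℝ) : EReal) ≤ f x + g (A x) := by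
    intro p' x
    by_cases hTf : f x = ⊤
    · rw [hTf, EReal.top_add_of_ne_bot (hgbot _)]
      exact le_top
    by_cases hTg : g (A x) = ⊤
    · rw [hTg, EReal.add_top_of_ne_bot (hfbot _)]
      exact le_top
    · have h7 := hFYf (ContinuousLinearMap.adjoint A p') x
      have h8 := hFYg (-p') (A x)
      rw [← EReal.coe_toReal hTf (hfbot x), ← EReal.coe_add, EReal.coe_le_coe_iff] at h7
      rw [← EReal.coe_toReal hTg (hgbot (A x)), ← EReal.coe_add, EReal.coe_le_coe_iff] at h8
      rw [ContinuousLinearMap.adjoint_inner_left A x p'] at h7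
      rw [inner_neg_left p' (A x)] at h8
      rw [← EReal.coe_toReal hTf (hfbot x), ← EReal.coe_toReal hTg (hgbot (A x)),
        ← EReal.coe_add, EReal.coe_le_coe_iff]
      unfold theta
      linarith
  have hvPlb : ∀ p' : Euc m, ((-(theta f g A p') : ℝ) : EReal) ≤ vPrimal f g A := by
    intro p'
    unfold vPrimal
    exact le_iInf (hwp p')
  have hvPub : vPrimal f g A ≤ (((f x₀).toReal + (g (A x₀)).toReal : ℝ) : EReal) := by
    unfold vPrimal
    have h7 := iInf_le (fun x => f x + g (A x)) x₀
    rw [hfa₀, hgb₀, ← EReal.coe_add] at h7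
    exact h7
  have hvPbot : vPrimal f g A ≠ ⊥ := by
    intro h
    have := hvPlb 0
    rw [h] at this
    exact EReal.coe_ne_bot _ (le_bot_iff.mp this)
  have hvPtop : vPrimal f g A ≠ ⊤ := by
    intro h
    rw [h] at hvPub
    exact EReal.coe_ne_top _ (top_le_iff.mp hvPub)
  have hw : vPrimal f g A = (((vPrimal f g A).toReal : ℝ) : EReal) :=
    (EReal.coe_toReal hvPtop hvPbot).symm
  have hwub : ∀ p' : Euc m, -(theta f g A p') ≤ (vPrimal f g A).toReal := by
    intro p'
    have h7 := hvPlb p'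
    rw [hw, EReal.coe_le_coe_iff] at h7
    exact h7
  have hvdw : vDual f g A ≤ (vPrimal f g A).toReal := by
    unfold vDual
    have h7 : -(vPrimal f g A).toReal ≤ ⨅ p', theta f g A p' :=
      le_ciInf fun p' => by linarith [hwub p']
    linarith
  have hθeq : theta f g A p
      = conjFn f (ContinuousLinearMap.adjoint A p) + conjFn g (-p) := rfl
  rw [hθeq] at h1
  have hexp : 2 * (1 + 2 * Real.sqrt 3) * ε = 2 * ε + 4 * (Real.sqrt 3 * ε) := by ring
  refine ⟨(f (xρ p)).toReal, (g (xμ p)).toReal, hfa, hgb, ?_, ?_⟩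
  · rw [abs_le]
    constructor
    · linarith
    · linarith
  · rw [hw, ← EReal.coe_add, EReal.coe_le_coe_iff]
    have hub : (f (xρ p)).toReal + (g (xμ p)).toReal - vDual f g A
        ≤ 2 * (1 + 2 * Real.sqrt 3) * ε := by linarith
    linarith
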